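/- arXiv:1704.01862 — 2 statements merged into one kernel-verified Lean document; each statement's English description precedes it below -/
import Mathlib

section
/- Let C ⊆ ℝ^d be a finite nonempty set of centers and let A ⊆ ℝ^d be finite nonempty with Φ(C,A) > 0. If c is drawn from A with probability Φ(C,{c})/Φ(C,A) (D²-sampling conditioned on landing in A), then E[Φ(C∪{c},A)] ≤ 8·Δ₁(A); equivalently, Σ_{c∈A} (Φ(C,{c})/Φ(C,A))·Φ(C∪{c},A) ≤ 8·Δ₁(A). -/
open Finset
open scoped BigOperators
open Classical

noncomputable section

/-- Points of `ℝ^d`. -/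
abbrev Pt (d : ℕ) := EuclideanSpace ℝ (Fin d)

/-- `Φ(C, X) = Σ_{x ∈ X} min_{c ∈ C} ‖x - c‖²`. -/
noncomputable def Phi {d : ℕ} (C X : Finset (Pt d)) : ℝ :=
  ∑ x ∈ X, sInf ((fun c => ‖x - c‖ ^ 2) '' (C : Set (Pt d)))

/-- The centroid `μ(X)` of a finite set of points. -/
noncomputable def ctr {d : ℕ} (X : Finset (Pt d)) : Pt d :=
  (X.card : ℝ)⁻¹ • ∑ x ∈ X, x

/-- `Δ₁(X) = Φ({μ(X)}, X)`. -/
noncomputable def Delta1 {d : ℕ} (X : Finset (Pt d)) : ℝ := Phi {ctr X} X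

/-- `Δ_k(X)`: the optimal `k`-means cost of `X`. -/
noncomputable def DeltaK {d : ℕ} (k : ℕ) (X : Finset (Pt d)) : ℝ :=
  sInf ((fun C => Phi C X) '' {C : Finset (Pt d) | C.card = k})

/-- `X₁, …, X_k` is an optimal `k`-means partition of `X`. -/
def IsOptPartition {d : ℕ} (k : ℕ) (X : Finset (Pt d)) (Xs : Fin k → Finset (Pt d)) : Prop :=
  (∀ j, (Xs j).Nonempty) ∧
  (∀ j l, j ≠ l → Disjoint (Xs j) (Xs l)) ∧
  Finset.univ.biUnion Xs = X ∧
  ∑ j, Delta1 (Xs j) = DeltaK k X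

/-- `X` is `(k, ε)`-irreducible: `Δ_{k-1}(X) ≥ (1+ε)·Δ_k(X)`. -/
def KIrreducible {d : ℕ} (k : ℕ) (ε : ℝ) (X : Finset (Pt d)) : Prop :=
  (1 + ε) * DeltaK k X ≤ DeltaK (k - 1) X

/-- The invariant `P(i)`: `Ci` consists of the centers `c r` for `r < i` (clusters reindexed
so that the covered clusters come first), each `c r` is a `(1 + ε/16)`-good center for the
optimal cluster `Xs r`, and `Φ(Ci, X) > 0`. -/
def InvariantP {d k : ℕ} (ε : ℝ) (X : Finset (Pt d)) (Xs : Fin k → Finset (Pt d))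
    (i : ℕ) (c : Fin k → Pt d) (Ci : Finset (Pt d)) : Prop :=
  Ci = Finset.image c (Finset.univ.filter (fun r : Fin k => r.val < i)) ∧
  (∀ r : Fin k, r.val < i → Phi {c r} (Xs r) ≤ (1 + ε / 16) * Delta1 (Xs r)) ∧
  0 < Phi Ci X

lemma phi_eq {d : ℕ} (C X : Finset (Pt d)) (hC : C.Nonempty) :
    Phi C X = ∑ x ∈ X, C.inf' hC (fun c => ‖x - c‖ ^ 2) := by
  unfold Phi
  refine Finset.sum_congr rfl fun x _ => ?_
  rw [Finset.inf'_eq_csInf_image]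

lemma delta1_eq {d : ℕ} (A : Finset (Pt d)) :
    Delta1 A = ∑ a ∈ A, ‖a - ctr A‖ ^ 2 := by
  unfold Delta1 Phi
  refine Finset.sum_congr rfl fun x _ => ?_
  simp

lemma sum_sub_ctr {d : ℕ} (A : Finset (Pt d)) (hA : A.Nonempty) :
    ∑ a ∈ A, (a - ctr A) = 0 := by
  have hn : (A.card : ℝ) ≠ 0 := by
    exact_mod_cast (Finset.card_pos.mpr hA).ne'
  rw [Finset.sum_sub_distrib, Finset.sum_const, ctr, ← Nat.cast_smul_eq_nsmul ℝ, smul_smul,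
    mul_inv_cancel₀ hn, one_smul, sub_self]

lemma sum_dist_sq {d : ℕ} (A : Finset (Pt d)) (hA : A.Nonempty) (c : Pt d) :
    ∑ a ∈ A, ‖a - c‖ ^ 2 = Delta1 A + (A.card : ℝ) * ‖ctr A - c‖ ^ 2 := by
  have h : ∀ a : Pt d, ‖a - c‖ ^ 2
      = ‖a - ctr A‖ ^ 2 + 2 * (inner ℝ (a - ctr A) (ctr A - c) : ℝ) + ‖ctr A - c‖ ^ 2 := by
    intro a
    have : a - c = (a - ctr A) + (ctr A - c) := by abel
    rw [this, norm_add_sq_real]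
  rw [show ∑ a ∈ A, ‖a - c‖ ^ 2 = ∑ a ∈ A, (‖a - ctr A‖ ^ 2 + 2 * (inner ℝ (a - ctr A) (ctr A - c) : ℝ) + ‖ctr A - c‖ ^ 2) from Finset.sum_congr rfl fun a _ => h a]
  rw [Finset.sum_add_distrib, Finset.sum_add_distrib, delta1_eq, Finset.sum_const,
    nsmul_eq_mul]
  have : ∑ a ∈ A, 2 * (inner ℝ (a - ctr A) (ctr A - c) : ℝ) = 0 := by
    rw [← Finset.mul_sum, ← sum_inner, sum_sub_ctr A hA, inner_zero_left, mul_zero]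
  rw [this]; ring

/-- If `c` is drawn from `A` by `D²`-sampling w.r.t. a finite nonempty
center set `C` (with `Φ(C, A) > 0`), i.e. with probability `Φ(C,{c})/Φ(C,A)`, then
`E[Φ(C ∪ {c}, A)] ≤ 8·Δ₁(A)`. -/
theorem stmt_2 {d : ℕ} (C A : Finset (Pt d)) (hC : C.Nonempty) (hA : A.Nonempty)
    (hpos : 0 < Phi C A) :
    ∑ c ∈ A, (Phi C {c} / Phi C A) * Phi (insert c C) A ≤ 8 * Delta1 A := by
  have hn : (0 : ℝ) < (A.card : ℝ) := by exact_mod_cast Finset.card_pos.mpr hA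
  set g : Pt d → ℝ := fun a => C.inf' hC (fun c => ‖a - c‖ ^ 2) with hg
  have hPhiA : Phi C A = ∑ a ∈ A, g a := phi_eq C A hC
  have hPhis : ∀ c : Pt d, Phi C {c} = g c := by
    intro c; rw [phi_eq C {c} hC, Finset.sum_singleton]
  have hgnn : ∀ a, 0 ≤ g a := fun a => Finset.le_inf' hC _ (fun c _ => sq_nonneg _)
  have hkey : ∀ a c : Pt d, g c ≤ 2 * g a + 2 * ‖a - c‖ ^ 2 := by
    intro a c
    obtain ⟨c0, hc0, hgc0⟩ := Finset.exists_mem_eq_inf' hC (fun c' => ‖a - c'‖ ^ 2)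
    have h1 : g c ≤ ‖c - c0‖ ^ 2 := Finset.inf'_le _ hc0
    have h2 : ‖c - c0‖ ≤ ‖c - a‖ + ‖a - c0‖ := by
      have := dist_triangle c a c0
      simpa [dist_eq_norm] using this
    have h4 : ‖c - a‖ = ‖a - c‖ := norm_sub_rev _ _
    have hga : g a = ‖a - c0‖ ^ 2 := hgc0
    nlinarith [norm_nonneg (c - c0), norm_nonneg (c - a), norm_nonneg (a - c0),
      sq_nonneg (‖c - a‖ - ‖a - c0‖)]
  have hsum : ∀ c : Pt d, (A.card : ℝ) * g c ≤ 2 * Phi C A + 2 * ∑ a ∈ A, ‖a - c‖ ^ 2 := by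
    intro c
    have h := Finset.sum_le_sum (fun a (_ : a ∈ A) => hkey a c)
    rw [Finset.sum_const, nsmul_eq_mul, Finset.sum_add_distrib, ← Finset.mul_sum,
      ← Finset.mul_sum, ← hPhiA] at h
    exact h
  have hins : ∀ c : Pt d, Phi (insert c C) A = ∑ a ∈ A, min (‖a - c‖ ^ 2) (g a) := by
    intro c
    rw [phi_eq _ A (Finset.insert_nonempty c C)]
    refine Finset.sum_congr rfl fun a _ => ?_
    rw [Finset.inf'_insert hC]
  have hterm : ∀ c ∈ A, (Phi C {c} / Phi C A) * Phi (insert c C) A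
      ≤ 4 / (A.card : ℝ) * ∑ a ∈ A, ‖a - c‖ ^ 2 := by
    intro c _
    set S := ∑ a ∈ A, ‖a - c‖ ^ 2 with hS
    set T := ∑ a ∈ A, min (‖a - c‖ ^ 2) (g a) with hT
    have hTS : T ≤ S := Finset.sum_le_sum fun a _ => min_le_left _ _
    have hTP : T ≤ Phi C A := by
      rw [hPhiA]; exact Finset.sum_le_sum fun a _ => min_le_right _ _
    have hT0 : 0 ≤ T := Finset.sum_nonneg fun a _ => le_min (sq_nonneg _) (hgnn a)
    have hS0 : 0 ≤ S := Finset.sum_nonneg fun a _ => sq_nonneg _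
    rw [hPhis, hins c, ← hT, div_mul_eq_mul_div, div_le_iff₀ hpos]
    have h1 := hsum c
    have h2 : (A.card : ℝ) * (g c * T) ≤ 4 * Phi C A * S := by nlinarith
    have h3 : g c * T ≤ (4 * Phi C A * S) / (A.card : ℝ) := by
      rw [le_div_iff₀ hn]; linarith [h2]
    calc g c * T ≤ (4 * Phi C A * S) / (A.card : ℝ) := h3
      _ = 4 / (A.card : ℝ) * S * Phi C A := by ring
  calc ∑ c ∈ A, (Phi C {c} / Phi C A) * Phi (insert c C) A
      ≤ ∑ c ∈ A, 4 / (A.card : ℝ) * ∑ a ∈ A, ‖a - c‖ ^ 2 := Finset.sum_le_sum hterm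
    _ = 4 / (A.card : ℝ) * ∑ c ∈ A, ∑ a ∈ A, ‖a - c‖ ^ 2 := by rw [Finset.mul_sum]
    _ = 4 / (A.card : ℝ) * (2 * (A.card : ℝ) * Delta1 A) := by
        congr 1
        rw [show (∑ c ∈ A, ∑ a ∈ A, ‖a - c‖ ^ 2)
            = ∑ c ∈ A, (Delta1 A + (A.card : ℝ) * ‖ctr A - c‖ ^ 2) from
          Finset.sum_congr rfl fun c _ => sum_dist_sq A hA c]
        rw [Finset.sum_add_distrib, Finset.sum_const, nsmul_eq_mul, ← Finset.mul_sum]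
        have h2 : ∑ c ∈ A, ‖ctr A - c‖ ^ 2 = Delta1 A := by
          rw [delta1_eq]; exact Finset.sum_congr rfl fun c _ => by rw [norm_sub_rev]
        rw [h2]; ring
    _ = 8 * Delta1 A := by field_simp; ring
end
end

section
/- Let 0 < ε ≤ 1/2, let X ⊆ ℝ^d be finite and (k,ε)-irreducible with optimal k-means partition X₁,…,X_k, let 1 ≤ i < k, and let C_i be a set of i centers satisfying the invariant P(i). Then there exists an index j ∈ {i+1,…,k} such that Φ(C_i, X_j) ≥ (ε/(4k))·Φ(C_i, X). -/
open Finset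
open scoped BigOperators
open Classical

noncomputable section

lemma g_nonneg {d : ℕ} (C : Finset (Pt d)) (x : Pt d) :
    0 ≤ sInf ((fun c => ‖x - c‖ ^ 2) '' (C : Set (Pt d))) := by
  apply Real.sInf_nonneg
  rintro y ⟨c, -, rfl⟩
  positivity

lemma phi_nonneg {d : ℕ} (C X : Finset (Pt d)) : 0 ≤ Phi C X :=
  Finset.sum_nonneg fun x _ => g_nonneg C x

lemma g_le {d : ℕ} {C : Finset (Pt d)} {c : Pt d} (hc : c ∈ C) (x : Pt d) :
    sInf ((fun c => ‖x - c‖ ^ 2) '' (C : Set (Pt d))) ≤ ‖x - c‖ ^ 2 := by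
  apply csInf_le ⟨0, by rintro y ⟨b, -, rfl⟩; positivity⟩
  exact ⟨c, by simpa using hc, rfl⟩

lemma phi_singleton {d : ℕ} (c : Pt d) (X : Finset (Pt d)) :
    Phi {c} X = ∑ x ∈ X, ‖x - c‖ ^ 2 := by
  unfold Phi
  congr 1; ext x
  simp

lemma phi_le_singleton {d : ℕ} {C : Finset (Pt d)} {c : Pt d} (hc : c ∈ C) (X : Finset (Pt d)) :
    Phi C X ≤ Phi {c} X := by
  rw [phi_singleton]
  exact Finset.sum_le_sum fun x _ => g_le hc x

lemma phi_anti {d : ℕ} {C C' : Finset (Pt d)} (hC : C.Nonempty) (h : C ⊆ C')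
    (X : Finset (Pt d)) : Phi C' X ≤ Phi C X := by
  apply Finset.sum_le_sum
  intro x _
  apply csInf_le_csInf ⟨0, by rintro y ⟨b, -, rfl⟩; positivity⟩
  · exact Set.Nonempty.image _ (by exact_mod_cast hC)
  · exact Set.image_mono (by exact_mod_cast h)


/-- Under the invariant `P(i)` (clusters reindexed so the covered clusters
are `X₁, …, X_i`), there is an uncovered cluster `X_j`, `j ∈ {i+1, …, k}`, with
`Φ(C_i, X_j) ≥ (ε/(4k))·Φ(C_i, X)`. -/
theorem stmt_8 {d k : ℕ} (ε : ℝ) (hε0 : 0 < ε) (hε : ε ≤ 1 / 2)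
    (X : Finset (Pt d)) (hirr : KIrreducible k ε X)
    (Xs : Fin k → Finset (Pt d)) (hopt : IsOptPartition k X Xs)
    (i : ℕ) (hi : 1 ≤ i) (hik : i < k)
    (c : Fin k → Pt d) (Ci : Finset (Pt d)) (hinv : InvariantP ε X Xs i c Ci) :
    ∃ j : Fin k, i ≤ j.val ∧ (ε / (4 * k)) * Phi Ci X ≤ Phi Ci (Xs j) := by
  obtain ⟨hCi, hgood, hpos⟩ := hinv
  -- Ci is nonempty
  have hCine : Ci.Nonempty := by
    rcases Ci.eq_empty_or_nonempty with rfl | h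
    · simp [Phi, Real.sInf_empty] at hpos
    · exact h
  -- d ≥ 1
  rcases Nat.eq_zero_or_pos d with rfl | hd
  · exfalso
    have : Phi Ci X = 0 := by
      apply le_antisymm _ (phi_nonneg _ _)
      apply Finset.sum_nonpos
      intro x _
      obtain ⟨c0, hc0⟩ := hCine
      have := g_le hc0 x
      have hx : x = c0 := Subsingleton.elim x c0
      simpa [hx] using this
    linarith
  -- Pt d is infinite
  haveI : Infinite (Pt d) := by
    have hnt : Nontrivial (Pt d) := by
      haveI : Nonempty (Fin d) := ⟨⟨0, hd⟩⟩
      infer_instance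
    obtain ⟨v, hv⟩ := exists_ne (0 : Pt d)
    exact Infinite.of_injective (fun n : ℕ => (n : ℝ) • v)
      (fun a b h => Nat.cast_injective (smul_left_injective ℝ hv h))
  by_contra hcon
  push_neg at hcon
  set Φ := Phi Ci X with hΦdef
  -- |Ci| ≤ i
  have hcard : Ci.card ≤ i := by
    rw [hCi]
    refine le_trans (Finset.card_image_le) ?_
    calc (Finset.univ.filter (fun r : Fin k => r.val < i)).card
        ≤ (Finset.range i).card := by
          apply Finset.card_le_card_of_injOn (fun r => r.val)
          · intro r hr; simp at hr; simpa using hr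
          · intro a _ b _ hab; exact Fin.val_injective hab
      _ = i := Finset.card_range i
  -- Δ_{k-1}(X) ≤ Φ
  have hDk1 : DeltaK (k - 1) X ≤ Φ := by
    obtain ⟨C', hsub, hcard'⟩ := Infinite.exists_superset_card_eq Ci (k - 1)
      (le_trans hcard (by omega))
    calc DeltaK (k - 1) X ≤ Phi C' X := by
          apply csInf_le ⟨0, by rintro y ⟨B, -, rfl⟩; exact phi_nonneg _ _⟩
          exact ⟨C', hcard', rfl⟩
      _ ≤ Φ := phi_anti hCine hsub X
  -- Δ_k is the optimal cost
  set Dk := DeltaK k X with hDkdef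
  have hDsum : ∑ j, Delta1 (Xs j) = Dk := hopt.2.2.2
  have hD0 : 0 ≤ Dk := by
    rw [← hDsum]
    exact Finset.sum_nonneg fun j _ => phi_nonneg _ _
  -- Φ decomposes over clusters
  have hsplit : Φ = ∑ j, Phi Ci (Xs j) := by
    have hdisj : Set.PairwiseDisjoint (↑(Finset.univ : Finset (Fin k))) Xs :=
      fun a _ b _ hab => hopt.2.1 a b hab
    rw [hΦdef, Phi, ← hopt.2.2.1, Finset.sum_biUnion hdisj]
    rfl
  have hsplit2 : ∑ j, Phi Ci (Xs j)
      = ∑ j ∈ Finset.univ.filter (fun j : Fin k => j.val < i), Phi Ci (Xs j)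
      + ∑ j ∈ Finset.univ.filter (fun j : Fin k => ¬ j.val < i), Phi Ci (Xs j) :=
    (Finset.sum_filter_add_sum_filter_not _ _ _).symm
  -- covered clusters
  have hcov : ∑ j ∈ Finset.univ.filter (fun j : Fin k => j.val < i), Phi Ci (Xs j)
      ≤ (1 + ε / 16) * Dk := by
    calc ∑ j ∈ Finset.univ.filter (fun j : Fin k => j.val < i), Phi Ci (Xs j)
        ≤ ∑ j ∈ Finset.univ.filter (fun j : Fin k => j.val < i), (1 + ε / 16) * Delta1 (Xs j) := by
          apply Finset.sum_le_sum
          intro r hr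
          have hri : r.val < i := by simpa using hr
          have hcr : c r ∈ Ci := by
            rw [hCi]; exact Finset.mem_image.mpr ⟨r, by simpa using hri, rfl⟩
          exact le_trans (phi_le_singleton hcr (Xs r)) (hgood r hri)
      _ ≤ ∑ j, (1 + ε / 16) * Delta1 (Xs j) := by
          apply Finset.sum_le_sum_of_subset_of_nonneg (Finset.filter_subset _ _)
          intro j _ _
          have := phi_nonneg ({ctr (Xs j)} : Finset (Pt d)) (Xs j)
          have h16 : (0:ℝ) ≤ 1 + ε / 16 := by linarith
          exact mul_nonneg h16 this
      _ = (1 + ε / 16) * Dk := by rw [← Finset.mul_sum, hDsum]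
  -- uncovered clusters
  have huncov : ∑ j ∈ Finset.univ.filter (fun j : Fin k => ¬ j.val < i), Phi Ci (Xs j)
      < (ε / 4) * Φ := by
    have hne : (Finset.univ.filter (fun j : Fin k => ¬ j.val < i)).Nonempty :=
      ⟨⟨i, hik⟩, by simp⟩
    have hb0 : 0 ≤ ε / (4 * k) * Φ := by
      apply mul_nonneg (div_nonneg hε0.le (by positivity)) hpos.le
    calc ∑ j ∈ Finset.univ.filter (fun j : Fin k => ¬ j.val < i), Phi Ci (Xs j)
        < ∑ _j ∈ Finset.univ.filter (fun j : Fin k => ¬ j.val < i), ε / (4 * k) * Φ := by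
          apply Finset.sum_lt_sum_of_nonempty hne
          intro j hj
          have : i ≤ j.val := by simpa using (Finset.mem_filter.mp hj).2
          exact hcon j this
      _ = (Finset.univ.filter (fun j : Fin k => ¬ j.val < i)).card * (ε / (4 * k) * Φ) := by
          rw [Finset.sum_const, nsmul_eq_mul]
      _ ≤ (k : ℝ) * (ε / (4 * k) * Φ) := by
          apply mul_le_mul_of_nonneg_right _ hb0
          exact_mod_cast le_trans (Finset.card_filter_le _ _) (by simp)
      _ = (ε / 4) * Φ := by
          have hk0 : (k : ℝ) ≠ 0 := Nat.cast_ne_zero.mpr (by omega)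
          field_simp
  -- combine
  have hmain : Φ < (1 + ε / 16) * Dk + (ε / 4) * Φ := by
    linarith [hsplit, hsplit2, hcov, huncov]
  have hirr' : (1 + ε) * Dk ≤ Φ := le_trans hirr hDk1
  nlinarith [mul_pos hε0 hpos, mul_nonneg hε0.le hD0, mul_nonneg (mul_nonneg hε0.le hε0.le) hD0]
end
end
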